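/- The posterior predictive regression curves form a convergent martingale: $\lim_n E_{(R^*_{n,x'_{(n)}})^R}(p_2 \mid p_1 = x_1) = E_{(R^*_{\mathbb{N},x'})^R}(p_2 \mid p_1 = x_1)$ for $\Pi_{\mathbb{N}}$-almost every $(x',x,\theta)$, where $x_1$ is the first coordinate of $x$ and $x'_{(n)} = (x'_1,\dots,x'_n)$. -/

import Mathlib

open MeasureTheory ProbabilityTheory Filter
open scoped ENNReal

/-- The joint distribution `Π_m` of the sample (of shape `α`), a new observation and the
parameter: `Π_m(A' × A × T) = ∫_T R_θ(A) S_θ(A') dQ(θ)`. -/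
noncomputable def PiM {Θ Ω₁ Ω₂ α : Type*} [MeasurableSpace Θ] [MeasurableSpace Ω₁]
    [MeasurableSpace Ω₂] [MeasurableSpace α]
    (Q : Measure Θ) (S : Kernel Θ α) (R : Kernel Θ (Ω₁ × Ω₂)) :
    Measure (α × (Ω₁ × Ω₂) × Θ) :=
  (Q ⊗ₘ (S ×ₖ R)).map fun p => (p.2.1, p.2.2, p.1)

/-- `g` is (a version of) the regression curve of the second coordinate `p₂` on the first
coordinate `p₁` under the distribution `ν` on `Ω₁ × ℝ`, i.e. `g x₁ = E_ν(p₂ | p₁ = x₁)`. -/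
def IsRegCurve {Ω₁ : Type*} [MeasurableSpace Ω₁] (ν : Measure (Ω₁ × ℝ)) (g : Ω₁ → ℝ) : Prop :=
  Integrable (fun x : Ω₁ × ℝ => x.2) ν ∧
  ∀ A₁ : Set Ω₁, MeasurableSet A₁ →
    ∫ x in Prod.fst ⁻¹' A₁, x.2 ∂ν = ∫ x in Prod.fst ⁻¹' A₁, g x.1 ∂ν

/-- `post` is a posterior distribution for the prior `Q` and the sampling kernel `S`. -/
def IsPosterior {Θ α : Type*} [MeasurableSpace Θ] [MeasurableSpace α]
    (Q : Measure Θ) (S : Kernel Θ α) (post : Kernel α Θ) : Prop :=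
  ∀ (A' : Set α) (T : Set Θ), MeasurableSet A' → MeasurableSet T →
    ∫⁻ θ in T, S θ A' ∂Q = ∫⁻ x' in A', post x' T ∂(Q.bind fun θ => S θ)

lemma aux_lintegral_ofReal_le {α : Type*} [MeasurableSpace α] (ν : Measure α) [IsFiniteMeasure ν]
    (f h : α → ℝ) (hf : Integrable f ν) (hh : Measurable h)
    (heq : ∀ B : Set ℝ, MeasurableSet B → ∫ a in h ⁻¹' B, f a ∂ν = ∫ a in h ⁻¹' B, h a ∂ν) :
    ∫⁻ a, ENNReal.ofReal (h a) ∂ν ≤ ∫⁻ a, ENNReal.ofReal |f a| ∂ν := by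
  set A : ℕ → Set α := fun M => h ⁻¹' (Set.Icc 0 (M : ℝ)) with hA
  have hAmeas : ∀ M, MeasurableSet (A M) := fun M => hh measurableSet_Icc
  have habs : Integrable (fun a => |f a|) ν := hf.abs
  have key : ∀ M : ℕ, ∫⁻ a in A M, ENNReal.ofReal (h a) ∂ν ≤ ∫⁻ a, ENNReal.ofReal |f a| ∂ν := by
    intro M
    have hint : IntegrableOn h (A M) ν := by
      refine Measure.integrableOn_of_bounded (M := (M : ℝ)) (measure_ne_top ν _) hh.aestronglyMeasurable ?_
      refine (ae_restrict_iff' (hAmeas M)).2 (ae_of_all _ fun a ha => ?_)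
      rw [Real.norm_eq_abs, abs_of_nonneg ha.1]
      exact ha.2
    have hnn : 0 ≤ᵐ[ν.restrict (A M)] h :=
      (ae_restrict_iff' (hAmeas M)).2 (ae_of_all _ fun a ha => ha.1)
    rw [← ofReal_integral_eq_lintegral_ofReal hint hnn, ← heq _ measurableSet_Icc]
    calc ENNReal.ofReal (∫ a in A M, f a ∂ν)
        ≤ ENNReal.ofReal (∫ a, |f a| ∂ν) := by
          refine ENNReal.ofReal_le_ofReal ?_
          calc ∫ a in A M, f a ∂ν ≤ ∫ a in A M, |f a| ∂ν :=
                setIntegral_mono hf.integrableOn habs.integrableOn fun a => le_abs_self _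
            _ ≤ ∫ a, |f a| ∂ν :=
                setIntegral_le_integral habs (ae_of_all _ fun a => abs_nonneg _)
      _ = ∫⁻ a, ENNReal.ofReal |f a| ∂ν :=
          ofReal_integral_eq_lintegral_ofReal habs (ae_of_all _ fun a => abs_nonneg _)
  have hmono : Monotone fun M : ℕ => (A M).indicator fun a => ENNReal.ofReal (h a) := by
    intro M N hMN
    exact Set.indicator_le_indicator_of_subset
      (fun a ha => ⟨ha.1, ha.2.trans (by exact_mod_cast hMN)⟩) (fun a => zero_le)
  have hsup : ∀ a, (⨆ M : ℕ, (A M).indicator (fun a => ENNReal.ofReal (h a)) a)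
      = ENNReal.ofReal (h a) := by
    intro a
    refine le_antisymm (iSup_le fun M => Set.indicator_le_self _ _ a) ?_
    rcases le_or_gt 0 (h a) with hpos | hneg
    · have ha : a ∈ A ⌈h a⌉₊ := ⟨hpos, Nat.le_ceil _⟩
      refine le_trans ?_ (le_iSup _ ⌈h a⌉₊)
      rw [Set.indicator_of_mem ha]
    · simp [ENNReal.ofReal_of_nonpos hneg.le]
  calc ∫⁻ a, ENNReal.ofReal (h a) ∂ν
      = ∫⁻ a, ⨆ M : ℕ, (A M).indicator (fun a => ENNReal.ofReal (h a)) a ∂ν := by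
        simp_rw [hsup]
    _ = ⨆ M : ℕ, ∫⁻ a, (A M).indicator (fun a => ENNReal.ofReal (h a)) a ∂ν :=
        lintegral_iSup (fun M => (ENNReal.measurable_ofReal.comp hh).indicator (hAmeas M)) hmono
    _ ≤ ∫⁻ a, ENNReal.ofReal |f a| ∂ν := by
        refine iSup_le fun M => ?_
        rw [lintegral_indicator (hAmeas M)]
        exact key M
lemma aux_ofReal_abs (t : ℝ) : ENNReal.ofReal |t| = ENNReal.ofReal t + ENNReal.ofReal (-t) := by
  rcases le_total 0 t with ht | ht
  · rw [abs_of_nonneg ht, ENNReal.ofReal_of_nonpos (show -t ≤ 0 by linarith), add_zero]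
  · rw [abs_of_nonpos ht, ENNReal.ofReal_of_nonpos ht, zero_add]

lemma aux_lintegral_abs_le {Ω₁ : Type*} [MeasurableSpace Ω₁] (ν : Measure (Ω₁ × ℝ))
    [IsFiniteMeasure ν] (g : Ω₁ → ℝ) (hg : Measurable g) (hreg : IsRegCurve ν g) :
    ∫⁻ x, ENNReal.ofReal |g x.1| ∂ν ≤ 2 * ∫⁻ x, ENNReal.ofReal |x.2| ∂ν := by
  have hgm : Measurable fun x : Ω₁ × ℝ => g x.1 := hg.comp measurable_fst
  have h1 : ∫⁻ x, ENNReal.ofReal (g x.1) ∂ν ≤ ∫⁻ x, ENNReal.ofReal |x.2| ∂ν := by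
    refine aux_lintegral_ofReal_le ν _ _ hreg.1 hgm fun B hB => ?_
    exact hreg.2 (g ⁻¹' B) (hg hB)
  have h2 : ∫⁻ x, ENNReal.ofReal (-g x.1) ∂ν ≤ ∫⁻ x, ENNReal.ofReal |x.2| ∂ν := by
    have := aux_lintegral_ofReal_le ν (fun x : Ω₁ × ℝ => -x.2) (fun x => -g x.1)
      hreg.1.neg hgm.neg (fun B hB => ?_)
    · calc ∫⁻ x, ENNReal.ofReal (-g x.1) ∂ν
          ≤ ∫⁻ x : Ω₁ × ℝ, ENNReal.ofReal |-x.2| ∂ν := this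
        _ = ∫⁻ x : Ω₁ × ℝ, ENNReal.ofReal |x.2| ∂ν := by simp_rw [abs_neg]
    · have hset : (fun x : Ω₁ × ℝ => -g x.1) ⁻¹' B = Prod.fst ⁻¹' ((fun t => -g t) ⁻¹' B) := rfl
      have hkey := hreg.2 ((fun t => -g t) ⁻¹' B) (hg.neg hB)
      rw [hset]
      calc ∫ a in Prod.fst ⁻¹' ((fun t => -g t) ⁻¹' B), (fun x : Ω₁ × ℝ => -x.2) a ∂ν
          = -∫ a in Prod.fst ⁻¹' ((fun t => -g t) ⁻¹' B), a.2 ∂ν := integral_neg _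
        _ = -∫ a in Prod.fst ⁻¹' ((fun t => -g t) ⁻¹' B), g a.1 ∂ν := by rw [hkey]
        _ = ∫ a in Prod.fst ⁻¹' ((fun t => -g t) ⁻¹' B), (fun x : Ω₁ × ℝ => -g x.1) a ∂ν :=
            (integral_neg _).symm
  calc ∫⁻ x, ENNReal.ofReal |g x.1| ∂ν
      = ∫⁻ x, (ENNReal.ofReal (g x.1) + ENNReal.ofReal (-g x.1)) ∂ν := by
        simp_rw [aux_ofReal_abs]
    _ = ∫⁻ x, ENNReal.ofReal (g x.1) ∂ν + ∫⁻ x, ENNReal.ofReal (-g x.1) ∂ν :=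
        lintegral_add_left (ENNReal.measurable_ofReal.comp hgm) _
    _ ≤ ∫⁻ x, ENNReal.ofReal |x.2| ∂ν + ∫⁻ x, ENNReal.ofReal |x.2| ∂ν := add_le_add h1 h2
    _ = 2 * ∫⁻ x, ENNReal.ofReal |x.2| ∂ν := (two_mul _).symm

lemma aux_integrable_of_lintegral_abs {α : Type*} [MeasurableSpace α] {ν : Measure α}
    {f : α → ℝ} (hf : Measurable f) (h : ∫⁻ a, ENNReal.ofReal |f a| ∂ν ≠ ⊤) :
    Integrable f ν := by
  refine ⟨hf.aestronglyMeasurable, ?_⟩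
  rw [hasFiniteIntegral_iff_norm]
  simpa [Real.norm_eq_abs] using h.lt_top
lemma aux_isProb_bind {Θ α : Type*} [MeasurableSpace Θ] [MeasurableSpace α]
    (Q : Measure Θ) [IsProbabilityMeasure Q] (S : Kernel Θ α) [IsMarkovKernel S] :
    IsProbabilityMeasure (Q.bind fun θ => S θ) := by
  constructor
  rw [Measure.bind_apply MeasurableSet.univ S.measurable.aemeasurable]
  simp

lemma aux_posterior_joint {Θ α : Type*} [MeasurableSpace Θ] [MeasurableSpace α]
    (Q : Measure Θ) [IsProbabilityMeasure Q] (S : Kernel Θ α) [IsMarkovKernel S]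
    (post : Kernel α Θ) [IsMarkovKernel post] (h : IsPosterior Q S post) :
    Q ⊗ₘ S = ((Q.bind fun θ => S θ) ⊗ₘ post).map Prod.swap := by
  haveI := aux_isProb_bind Q S
  refine ext_of_generate_finite _ generateFrom_prod.symm isPiSystem_prod ?_ ?_
  · rintro s ⟨T, hT, A', hA', rfl⟩
    rw [Measure.compProd_apply_prod hT hA',
      Measure.map_apply measurable_swap (hT.prod hA'), Set.preimage_swap_prod,
      Measure.compProd_apply_prod hA' hT, h A' T hA' hT]
  · haveI : IsProbabilityMeasure (((Q.bind fun θ => S θ) ⊗ₘ post).map Prod.swap) :=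
      Measure.isProbabilityMeasure_map measurable_swap.aemeasurable
    simp [measure_univ]

lemma aux_posterior_lintegral {Θ α : Type*} [MeasurableSpace Θ] [MeasurableSpace α]
    (Q : Measure Θ) [IsProbabilityMeasure Q] (S : Kernel Θ α) [IsMarkovKernel S]
    (post : Kernel α Θ) [IsMarkovKernel post] (h : IsPosterior Q S post)
    (F : Θ × α → ℝ≥0∞) (hF : Measurable F) :
    ∫⁻ θ, ∫⁻ x', F (θ, x') ∂(S θ) ∂Q
      = ∫⁻ x', ∫⁻ θ, F (θ, x') ∂(post x') ∂(Q.bind fun θ => S θ) := by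
  haveI := aux_isProb_bind Q S
  rw [← Measure.lintegral_compProd hF, aux_posterior_joint Q S post h,
    lintegral_map hF measurable_swap,
    Measure.lintegral_compProd (f := fun a => F a.swap) (hF.comp measurable_swap)]
  rfl

lemma aux_eq_compProd_of_rect {Θ α Ω : Type*} [MeasurableSpace Θ] [MeasurableSpace α]
    [MeasurableSpace Ω] (Q : Measure Θ) [IsProbabilityMeasure Q]
    (S : Kernel Θ α) [IsMarkovKernel S] (R' : Kernel Θ Ω) [IsMarkovKernel R']
    (post : Kernel α Θ) [IsMarkovKernel post] (hpost : IsPosterior Q S post)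
    (ν : Measure (α × Ω)) [IsProbabilityMeasure ν]
    (hν : ∀ A' A, MeasurableSet A' → MeasurableSet A →
      ν (A' ×ˢ A) = ∫⁻ θ, S θ A' * R' θ A ∂Q) :
    ν = (Q.bind fun θ => S θ) ⊗ₘ (R' ∘ₖ post) := by
  haveI := aux_isProb_bind Q S
  refine ext_of_generate_finite _ generateFrom_prod.symm isPiSystem_prod ?_ ?_
  · rintro s ⟨A', hA', A, hA, rfl⟩
    rw [hν A' A hA' hA, Measure.compProd_apply_prod hA' hA]
    have hkey := aux_posterior_lintegral Q S post hpost
      (fun p => R' p.1 A * A'.indicator 1 p.2)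
      (((R'.measurable_coe hA).comp measurable_fst).mul
        ((measurable_one.indicator hA').comp measurable_snd))
    calc ∫⁻ θ, S θ A' * R' θ A ∂Q
        = ∫⁻ θ, ∫⁻ x', R' θ A * A'.indicator 1 x' ∂(S θ) ∂Q := by
          refine lintegral_congr fun θ => ?_
          rw [lintegral_const_mul _ (measurable_one.indicator hA'),
            lintegral_indicator_one hA', mul_comm]
      _ = ∫⁻ x', ∫⁻ θ, R' θ A * A'.indicator 1 x' ∂(post x') ∂(Q.bind fun θ => S θ) := hkey
      _ = ∫⁻ x' in A', (R' ∘ₖ post) x' A ∂(Q.bind fun θ => S θ) := by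
          rw [← lintegral_indicator hA']
          refine lintegral_congr fun x' => ?_
          by_cases hx : x' ∈ A'
          · simp only [Set.indicator_of_mem hx, Pi.one_apply, mul_one,
              Kernel.comp_apply' _ _ _ hA]
          · simp [Set.indicator_of_notMem hx]
  · simp [measure_univ]
lemma aux_lintegral_abs_eq_of_integrable {α : Type*} [MeasurableSpace α] {ν : Measure α}
    {f : α → ℝ} (hf : Integrable f ν) : ∫⁻ a, ENNReal.ofReal |f a| ∂ν < ⊤ := by
  have := hf.2
  rw [hasFiniteIntegral_iff_norm] at this
  simpa [Real.norm_eq_abs] using this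

lemma aux_regression_compProd {γ Ω₁ : Type*} [MeasurableSpace γ] [MeasurableSpace Ω₁]
    (ρ : Measure γ) [IsProbabilityMeasure ρ] (κ : Kernel γ (Ω₁ × ℝ)) [IsMarkovKernel κ]
    (m : γ → Ω₁ → ℝ) (hm : Measurable (Function.uncurry m))
    (hreg : ∀ s, IsRegCurve (κ s) (m s))
    (hint : Integrable (fun z : γ × (Ω₁ × ℝ) => z.2.2) (ρ ⊗ₘ κ)) :
    Integrable (fun z : γ × (Ω₁ × ℝ) => m z.1 z.2.1) (ρ ⊗ₘ κ) ∧
    ∀ B : Set (γ × Ω₁), MeasurableSet B →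
      ∫ z in (fun z : γ × (Ω₁ × ℝ) => (z.1, z.2.1)) ⁻¹' B, z.2.2 ∂(ρ ⊗ₘ κ) =
      ∫ z in (fun z : γ × (Ω₁ × ℝ) => (z.1, z.2.1)) ⁻¹' B, m z.1 z.2.1 ∂(ρ ⊗ₘ κ) := by
  have hmz : Measurable fun z : γ × (Ω₁ × ℝ) => m z.1 z.2.1 :=
    hm.comp (measurable_fst.prodMk (measurable_fst.comp measurable_snd))
  have hms : ∀ s, Measurable (m s) := fun s => hm.comp measurable_prodMk_left
  have hintm : Integrable (fun z : γ × (Ω₁ × ℝ) => m z.1 z.2.1) (ρ ⊗ₘ κ) := by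
    refine aux_integrable_of_lintegral_abs hmz ?_
    have hcalc : ∫⁻ z, ENNReal.ofReal |m z.1 z.2.1| ∂(ρ ⊗ₘ κ)
        ≤ 2 * ∫⁻ z, ENNReal.ofReal |z.2.2| ∂(ρ ⊗ₘ κ) := by
      have hsnd : Measurable fun z : γ × (Ω₁ × ℝ) => z.2.2 := measurable_snd.snd
      rw [Measure.lintegral_compProd hmz.abs.ennreal_ofReal,
        Measure.lintegral_compProd hsnd.abs.ennreal_ofReal]
      refine le_trans
        (lintegral_mono fun s => aux_lintegral_abs_le (κ s) (m s) (hms s) (hreg s)) ?_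
      exact le_of_eq (lintegral_const_mul 2
        (Measurable.lintegral_kernel_prod_right' hsnd.abs.ennreal_ofReal))
    exact (hcalc.trans_lt (by
      exact ENNReal.mul_lt_top ENNReal.ofNat_lt_top (aux_lintegral_abs_eq_of_integrable hint))).ne
  refine ⟨hintm, fun B hB => ?_⟩
  have hSB : MeasurableSet ((fun z : γ × (Ω₁ × ℝ) => (z.1, z.2.1)) ⁻¹' B) :=
    (measurable_fst.prodMk (measurable_fst.comp measurable_snd)) hB
  rw [← integral_indicator hSB, ← integral_indicator hSB,
    Measure.integral_compProd (hint.indicator hSB),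
    Measure.integral_compProd (hintm.indicator hSB)]
  refine integral_congr_ae (ae_of_all _ fun s => ?_)
  have hA1 : MeasurableSet {x₁ : Ω₁ | (s, x₁) ∈ B} := measurable_prodMk_left hB
  have e1 : ∀ x : Ω₁ × ℝ,
      ((fun z : γ × (Ω₁ × ℝ) => (z.1, z.2.1)) ⁻¹' B).indicator
        (fun z : γ × (Ω₁ × ℝ) => z.2.2) (s, x)
      = (Prod.fst ⁻¹' {x₁ : Ω₁ | (s, x₁) ∈ B}).indicator (fun x : Ω₁ × ℝ => x.2) x := by
    intro x
    by_cases hx : (s, x.1) ∈ B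
    · rw [Set.indicator_of_mem
        (show (s, x) ∈ (fun z : γ × (Ω₁ × ℝ) => (z.1, z.2.1)) ⁻¹' B from hx),
        Set.indicator_of_mem (show x ∈ Prod.fst ⁻¹' {x₁ : Ω₁ | (s, x₁) ∈ B} from hx)]
    · rw [Set.indicator_of_notMem
        (show (s, x) ∉ (fun z : γ × (Ω₁ × ℝ) => (z.1, z.2.1)) ⁻¹' B from hx),
        Set.indicator_of_notMem (show x ∉ Prod.fst ⁻¹' {x₁ : Ω₁ | (s, x₁) ∈ B} from hx)]
  have e2 : ∀ x : Ω₁ × ℝ,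
      ((fun z : γ × (Ω₁ × ℝ) => (z.1, z.2.1)) ⁻¹' B).indicator
        (fun z : γ × (Ω₁ × ℝ) => m z.1 z.2.1) (s, x)
      = (Prod.fst ⁻¹' {x₁ : Ω₁ | (s, x₁) ∈ B}).indicator (fun x : Ω₁ × ℝ => m s x.1) x := by
    intro x
    by_cases hx : (s, x.1) ∈ B
    · rw [Set.indicator_of_mem
        (show (s, x) ∈ (fun z : γ × (Ω₁ × ℝ) => (z.1, z.2.1)) ⁻¹' B from hx),
        Set.indicator_of_mem (show x ∈ Prod.fst ⁻¹' {x₁ : Ω₁ | (s, x₁) ∈ B} from hx)]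
    · rw [Set.indicator_of_notMem
        (show (s, x) ∉ (fun z : γ × (Ω₁ × ℝ) => (z.1, z.2.1)) ⁻¹' B from hx),
        Set.indicator_of_notMem (show x ∉ Prod.fst ⁻¹' {x₁ : Ω₁ | (s, x₁) ∈ B} from hx)]
  simp_rw [e1, e2]
  rw [integral_indicator (measurable_fst hA1), integral_indicator (measurable_fst hA1)]
  exact (hreg s).2 _ hA1

/-- the posterior predictive regression curves converge `Π_ℕ`-almost everywhere
to the posterior predictive regression curve based on the whole infinite sample. -/
theorem stmt_5 {Θ Ω₁ : Type*} [MeasurableSpace Θ] [MeasurableSpace Ω₁]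
    (Q : Measure Θ) [IsProbabilityMeasure Q]
    (R : Kernel Θ (Ω₁ × ℝ)) [IsMarkovKernel R]
    (hsq : ∫⁻ θ, ∫⁻ x, ENNReal.ofReal (x.2 ^ 2) ∂(R θ) ∂Q ≠ ⊤)
    (Rn : (n : ℕ) → Kernel Θ (Fin n → Ω₁ × ℝ)) [∀ n, IsMarkovKernel (Rn n)]
    (hRn : ∀ n θ, Rn n θ = Measure.pi fun _ : Fin n => R θ)
    (Rinf : Kernel Θ (ℕ → Ω₁ × ℝ)) [IsMarkovKernel Rinf]
    (hRinf : ∀ θ n, (Rinf θ).map (fun x (i : Fin n) => x i) = Measure.pi fun _ : Fin n => R θ)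
    (r : Θ → Ω₁ → ℝ) (hr_meas : Measurable (Function.uncurry r))
    (hr : ∀ θ, IsRegCurve (R θ) (r θ))
    (postn : (n : ℕ) → Kernel (Fin n → Ω₁ × ℝ) Θ) [∀ n, IsMarkovKernel (postn n)]
    (hpostn : ∀ n, IsPosterior Q (Rn n) (postn n))
    (mstar : (n : ℕ) → (Fin n → Ω₁ × ℝ) → Ω₁ → ℝ)
    (hmstar_meas : ∀ n, Measurable (Function.uncurry (mstar n)))
    (hmstar : ∀ n x', IsRegCurve (Measure.bind (postn n x') fun θ => R θ) (mstar n x'))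
    (postinf : Kernel (ℕ → Ω₁ × ℝ) Θ) [IsMarkovKernel postinf]
    (hpostinf : IsPosterior Q Rinf postinf)
    (mstarinf : (ℕ → Ω₁ × ℝ) → Ω₁ → ℝ)
    (hmstarinf_meas : Measurable (Function.uncurry mstarinf))
    (hmstarinf : ∀ x', IsRegCurve (Measure.bind (postinf x') fun θ => R θ) (mstarinf x')) :
    ∀ᵐ p ∂(PiM Q Rinf R),
      Tendsto (fun n : ℕ => mstar n (fun i : Fin n => p.1 i) p.2.1.1)
        atTop (nhds (mstarinf p.1 p.2.1.1)) := by
  classical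
  set Ω := (ℕ → Ω₁ × ℝ) × (Ω₁ × ℝ) × Θ with hΩ
  set μ : Measure Ω := PiM Q Rinf R with hμdef
  -- basic measurable maps
  have he_meas : Measurable (fun p : Θ × ((ℕ → Ω₁ × ℝ) × (Ω₁ × ℝ)) => (p.2.1, p.2.2, p.1)) :=
    (measurable_fst.comp measurable_snd).prodMk
      ((measurable_snd.comp measurable_snd).prodMk measurable_fst)
  haveI : IsProbabilityMeasure μ := by
    rw [hμdef, PiM]
    exact Measure.isProbabilityMeasure_map he_meas.aemeasurable
  have hrestr_meas : ∀ n, Measurable (fun x : ℕ → Ω₁ × ℝ => fun i : Fin n => x (i : ℕ)) :=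
    fun n => measurable_pi_lambda _ fun i => measurable_pi_apply _
  -- the maps to (sample, new observation)
  set φn : (n : ℕ) → Ω → (Fin n → Ω₁ × ℝ) × (Ω₁ × ℝ) :=
    fun n p => (fun i : Fin n => p.1 (i : ℕ), p.2.1) with hφn
  set φinf : Ω → (ℕ → Ω₁ × ℝ) × (Ω₁ × ℝ) := fun p => (p.1, p.2.1) with hφinf
  have hφn_meas : ∀ n, Measurable (φn n) := fun n =>
    ((hrestr_meas n).comp measurable_fst).prodMk (measurable_fst.comp measurable_snd)
  have hφinf_meas : Measurable φinf := measurable_fst.prodMk (measurable_fst.comp measurable_snd)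
  -- identification of the mapped measures
  have hmapn : ∀ n, μ.map (φn n) = (Q.bind fun θ => Rn n θ) ⊗ₘ (R ∘ₖ postn n) := by
    intro n
    haveI : IsProbabilityMeasure (μ.map (φn n)) :=
      Measure.isProbabilityMeasure_map (hφn_meas n).aemeasurable
    refine aux_eq_compProd_of_rect Q (Rn n) R (postn n) (hpostn n) _ fun A' A hA' hA => ?_
    rw [hμdef, PiM, Measure.map_map (hφn_meas n) he_meas]
    have hpre : ((φn n) ∘ fun p : Θ × ((ℕ → Ω₁ × ℝ) × (Ω₁ × ℝ)) => (p.2.1, p.2.2, p.1)) ⁻¹'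
        (A' ×ˢ A) = Set.univ ×ˢ
          (((fun x : ℕ → Ω₁ × ℝ => fun i : Fin n => x (i : ℕ)) ⁻¹' A') ×ˢ A) := by
      ext q
      simp [Set.mem_prod, hφn]
    rw [Measure.map_apply ((hφn_meas n).comp he_meas) (hA'.prod hA), hpre,
      Measure.compProd_apply_prod MeasurableSet.univ (((hrestr_meas n) hA').prod hA),
      setLIntegral_univ]
    refine lintegral_congr fun θ => ?_
    rw [Kernel.prod_apply, Measure.prod_prod]
    congr 1
    have h1 := hRinf θ n
    rw [hRn n θ]
    rw [← h1, Measure.map_apply (hrestr_meas n) hA']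
  have hmapinf : μ.map φinf = (Q.bind fun θ => Rinf θ) ⊗ₘ (R ∘ₖ postinf) := by
    haveI : IsProbabilityMeasure (μ.map φinf) :=
      Measure.isProbabilityMeasure_map hφinf_meas.aemeasurable
    refine aux_eq_compProd_of_rect Q Rinf R postinf hpostinf _ fun A' A hA' hA => ?_
    rw [hμdef, PiM, Measure.map_map hφinf_meas he_meas]
    have hpre : (φinf ∘ fun p : Θ × ((ℕ → Ω₁ × ℝ) × (Ω₁ × ℝ)) => (p.2.1, p.2.2, p.1)) ⁻¹'
        (A' ×ˢ A) = Set.univ ×ˢ (A' ×ˢ A) := by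
      ext q
      simp [Set.mem_prod, hφinf]
    rw [Measure.map_apply (hφinf_meas.comp he_meas) (hA'.prod hA), hpre,
      Measure.compProd_apply_prod MeasurableSet.univ (hA'.prod hA), setLIntegral_univ]
    refine lintegral_congr fun θ => ?_
    rw [Kernel.prod_apply, Measure.prod_prod]
  -- integrability of the projection on the second coordinate of the new observation
  have hfmeas : Measurable (fun p : Ω => p.2.1.2) :=
    measurable_snd.comp (measurable_fst.comp measurable_snd)
  have hf_int : Integrable (fun p : Ω => p.2.1.2) μ := by
    refine aux_integrable_of_lintegral_abs hfmeas ?_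
    have hcalc : ∫⁻ p : Ω, ENNReal.ofReal |p.2.1.2| ∂μ
        = ∫⁻ θ, ∫⁻ w : (ℕ → Ω₁ × ℝ) × (Ω₁ × ℝ), ENNReal.ofReal |w.2.2| ∂((Rinf ×ₖ R) θ) ∂Q := by
      rw [hμdef, PiM, lintegral_map (hfmeas.abs.ennreal_ofReal) he_meas]
      exact Measure.lintegral_compProd
        (f := fun a : Θ × ((ℕ → Ω₁ × ℝ) × (Ω₁ × ℝ)) =>
          ENNReal.ofReal |(a.2.1, a.2.2, a.1).2.1.2|) (by fun_prop)
    have hinner : ∀ θ, ∫⁻ w : (ℕ → Ω₁ × ℝ) × (Ω₁ × ℝ), ENNReal.ofReal |w.2.2| ∂((Rinf ×ₖ R) θ)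
        = ∫⁻ x, ENNReal.ofReal |x.2| ∂(R θ) := by
      intro θ
      rw [Kernel.prod_apply,
        lintegral_prod _ ((measurable_snd.snd).abs.ennreal_ofReal.aemeasurable)]
      simp [lintegral_const]
    have hb : ∀ x : Ω₁ × ℝ, ENNReal.ofReal |x.2|
        ≤ 1 + ENNReal.ofReal (x.2 ^ 2) := by
      intro x
      calc ENNReal.ofReal |x.2| ≤ ENNReal.ofReal (1 + x.2 ^ 2) :=
            ENNReal.ofReal_le_ofReal (by nlinarith [abs_nonneg x.2, sq_abs x.2])
        _ = 1 + ENNReal.ofReal (x.2 ^ 2) := by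
            rw [ENNReal.ofReal_add (by norm_num) (sq_nonneg _), ENNReal.ofReal_one]
    rw [hcalc]
    have hle : ∫⁻ θ, ∫⁻ w : (ℕ → Ω₁ × ℝ) × (Ω₁ × ℝ), ENNReal.ofReal |w.2.2| ∂((Rinf ×ₖ R) θ) ∂Q
        ≤ 1 + ∫⁻ θ, ∫⁻ x, ENNReal.ofReal (x.2 ^ 2) ∂(R θ) ∂Q := by
      have h1 : ∀ θ, ∫⁻ x, ENNReal.ofReal |x.2| ∂(R θ)
          ≤ 1 + ∫⁻ x, ENNReal.ofReal (x.2 ^ 2) ∂(R θ) := by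
        intro θ
        calc ∫⁻ x, ENNReal.ofReal |x.2| ∂(R θ)
            ≤ ∫⁻ x, (1 + ENNReal.ofReal (x.2 ^ 2)) ∂(R θ) := lintegral_mono hb
          _ = 1 + ∫⁻ x, ENNReal.ofReal (x.2 ^ 2) ∂(R θ) := by
              rw [lintegral_add_left measurable_const]
              simp
      calc ∫⁻ θ, ∫⁻ w : (ℕ → Ω₁ × ℝ) × (Ω₁ × ℝ), ENNReal.ofReal |w.2.2| ∂((Rinf ×ₖ R) θ) ∂Q
          = ∫⁻ θ, ∫⁻ x, ENNReal.ofReal |x.2| ∂(R θ) ∂Q := lintegral_congr hinner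
        _ ≤ ∫⁻ θ, (1 + ∫⁻ x, ENNReal.ofReal (x.2 ^ 2) ∂(R θ)) ∂Q := lintegral_mono h1
        _ = 1 + ∫⁻ θ, ∫⁻ x, ENNReal.ofReal (x.2 ^ 2) ∂(R θ) ∂Q := by
            rw [lintegral_add_left measurable_const]
            simp
    exact (hle.trans_lt (by
      refine ENNReal.add_lt_top.2 ⟨ENNReal.one_lt_top, ?_⟩
      exact lt_of_le_of_ne le_top hsq)).ne
  -- integrability of the new observation's second coordinate w.r.t. the mapped measures
  have hint_n : ∀ n, Integrable (fun z : (Fin n → Ω₁ × ℝ) × (Ω₁ × ℝ) => z.2.2) (μ.map (φn n)) :=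
    fun n => (integrable_map_measure measurable_snd.snd.aestronglyMeasurable
      (hφn_meas n).aemeasurable).mpr hf_int
  have hint_inf : Integrable (fun z : (ℕ → Ω₁ × ℝ) × (Ω₁ × ℝ) => z.2.2) (μ.map φinf) :=
    (integrable_map_measure measurable_snd.snd.aestronglyMeasurable
      hφinf_meas.aemeasurable).mpr hf_int
  -- regression identities on the mapped measures
  have hregn : ∀ n,
      Integrable (fun z : (Fin n → Ω₁ × ℝ) × (Ω₁ × ℝ) => mstar n z.1 z.2.1) (μ.map (φn n)) ∧
      ∀ B : Set ((Fin n → Ω₁ × ℝ) × Ω₁), MeasurableSet B →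
        ∫ z in (fun z : (Fin n → Ω₁ × ℝ) × (Ω₁ × ℝ) => (z.1, z.2.1)) ⁻¹' B, z.2.2
            ∂(μ.map (φn n)) =
        ∫ z in (fun z : (Fin n → Ω₁ × ℝ) × (Ω₁ × ℝ) => (z.1, z.2.1)) ⁻¹' B,
            mstar n z.1 z.2.1 ∂(μ.map (φn n)) := by
    intro n
    haveI := aux_isProb_bind Q (Rn n)
    have hint' := hint_n n
    rw [hmapn n] at hint'
    rw [hmapn n]
    exact aux_regression_compProd _ _ _ (hmstar_meas n)
      (fun s => by rw [Kernel.comp_apply]; exact hmstar n s) hint'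
  have hreginf :
      Integrable (fun z : (ℕ → Ω₁ × ℝ) × (Ω₁ × ℝ) => mstarinf z.1 z.2.1) (μ.map φinf) ∧
      ∀ B : Set ((ℕ → Ω₁ × ℝ) × Ω₁), MeasurableSet B →
        ∫ z in (fun z : (ℕ → Ω₁ × ℝ) × (Ω₁ × ℝ) => (z.1, z.2.1)) ⁻¹' B, z.2.2
            ∂(μ.map φinf) =
        ∫ z in (fun z : (ℕ → Ω₁ × ℝ) × (Ω₁ × ℝ) => (z.1, z.2.1)) ⁻¹' B,
            mstarinf z.1 z.2.1 ∂(μ.map φinf) := by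
    haveI := aux_isProb_bind Q Rinf
    have hint' := hint_inf
    rw [hmapinf] at hint'
    rw [hmapinf]
    exact aux_regression_compProd _ _ _ hmstarinf_meas
      (fun s => by rw [Kernel.comp_apply]; exact hmstarinf s) hint'
  -- the filtration generated by the first n sample points and the first coordinate of x
  set ψ : (n : ℕ) → Ω → (Fin n → Ω₁ × ℝ) × Ω₁ :=
    fun n p => (fun i : Fin n => p.1 (i : ℕ), p.2.1.1) with hψdef
  set ψinf : Ω → (ℕ → Ω₁ × ℝ) × Ω₁ := fun p => (p.1, p.2.1.1) with hψinfdef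
  have hψ_meas : ∀ n, Measurable (ψ n) := fun n =>
    ((hrestr_meas n).comp measurable_fst).prodMk
      (measurable_fst.comp (measurable_fst.comp measurable_snd))
  have hψinf_meas : Measurable ψinf :=
    measurable_fst.prodMk (measurable_fst.comp (measurable_fst.comp measurable_snd))
  set ℱ : Filtration ℕ (inferInstance : MeasurableSpace Ω) :=
    { seq := fun n => MeasurableSpace.comap (ψ n) inferInstance
      mono' := by
        intro n m hnm
        show MeasurableSpace.comap (ψ n) inferInstance ≤ MeasurableSpace.comap (ψ m) inferInstance
        have hT : Measurable (fun z : (Fin m → Ω₁ × ℝ) × Ω₁ =>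
            ((fun i : Fin n => z.1 (Fin.castLE hnm i)), z.2)) :=
          ((measurable_pi_lambda _ fun i => measurable_pi_apply _).comp
            measurable_fst).prodMk measurable_snd
        have hcomp : ψ n = (fun z : (Fin m → Ω₁ × ℝ) × Ω₁ =>
            ((fun i : Fin n => z.1 (Fin.castLE hnm i)), z.2)) ∘ ψ m := rfl
        rw [hcomp, ← MeasurableSpace.comap_comp]
        exact MeasurableSpace.comap_mono hT.comap_le
      le' := fun n => (hψ_meas n).comap_le } with hℱdef
  have hℱapp : ∀ n, ℱ n = MeasurableSpace.comap (ψ n) inferInstance := fun n => rfl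
  -- the sup σ-algebra is the one generated by the whole sample and x₁
  have hsup : (⨆ n, ℱ n) = MeasurableSpace.comap ψinf inferInstance := by
    refine le_antisymm (iSup_le fun n => ?_) ?_
    · have hT : Measurable (fun z : (ℕ → Ω₁ × ℝ) × Ω₁ =>
          ((fun i : Fin n => z.1 (i : ℕ)), z.2)) :=
        ((hrestr_meas n).comp measurable_fst).prodMk measurable_snd
      have hcomp : ψ n = (fun z : (ℕ → Ω₁ × ℝ) × Ω₁ =>
          ((fun i : Fin n => z.1 (i : ℕ)), z.2)) ∘ ψinf := rfl
      rw [hℱapp, hcomp, ← MeasurableSpace.comap_comp]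
      exact MeasurableSpace.comap_mono hT.comap_le
    · have hmeas_psi' : ∀ n, @Measurable Ω ((Fin n → Ω₁ × ℝ) × Ω₁) (⨆ k, ℱ k) _ (ψ n) :=
        fun n => (Measurable.of_comap_le
          (le_refl (MeasurableSpace.comap (ψ n) inferInstance))).mono
          (by exact le_iSup (fun k => (ℱ k : MeasurableSpace Ω)) n) le_rfl
      have hA : @Measurable Ω (ℕ → Ω₁ × ℝ) (⨆ k, ℱ k) _ (fun p : Ω => p.1) := by
        refine @measurable_pi_lambda Ω ℕ (fun _ => Ω₁ × ℝ) (⨆ k, (ℱ k : MeasurableSpace Ω)) _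
          (fun p : Ω => p.1) (fun j => ?_)
        exact ((measurable_pi_apply (⟨j, j.lt_succ_self⟩ : Fin (j + 1))).comp
          measurable_fst).comp (hmeas_psi' (j + 1))
      have hB : @Measurable Ω Ω₁ (⨆ k, ℱ k) _ (fun p : Ω => p.2.1.1) :=
        measurable_snd.comp (hmeas_psi' 0)
      exact (Measurable.prodMk hA hB).comap_le
  -- conditional expectation identification at finite times
  have hgn_ae : ∀ n, (fun p : Ω => mstar n (fun i : Fin n => p.1 (i : ℕ)) p.2.1.1)
      =ᵐ[μ] μ[(fun p : Ω => p.2.1.2)|ℱ n] := by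
    intro n
    have hgi : Integrable (fun p : Ω => mstar n (fun i : Fin n => p.1 (i : ℕ)) p.2.1.1) μ :=
      (hregn n).1.comp_aemeasurable (hφn_meas n).aemeasurable
    have hψm : @Measurable Ω ((Fin n → Ω₁ × ℝ) × Ω₁) (ℱ n) _ (ψ n) :=
      Measurable.of_comap_le (by exact le_refl (MeasurableSpace.comap (ψ n) inferInstance))
    have hgsm : @Measurable Ω ℝ (ℱ n) _
        (fun p : Ω => mstar n (fun i : Fin n => p.1 (i : ℕ)) p.2.1.1) :=
      (hmstar_meas n).comp hψm
    refine ae_eq_condExp_of_forall_setIntegral_eq (ℱ.le n) hf_int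
      (fun s _ _ => hgi.integrableOn) (fun s hs _ => ?_)
      hgsm.stronglyMeasurable.aestronglyMeasurable
    obtain ⟨B, hB, rfl⟩ := hs
    have hSB : MeasurableSet ((fun z : (Fin n → Ω₁ × ℝ) × (Ω₁ × ℝ) => (z.1, z.2.1)) ⁻¹' B) :=
      (measurable_fst.prodMk (measurable_fst.comp measurable_snd)) hB
    have h1 : ∫ z in (fun z : (Fin n → Ω₁ × ℝ) × (Ω₁ × ℝ) => (z.1, z.2.1)) ⁻¹' B, z.2.2
        ∂(μ.map (φn n)) = ∫ p in ψ n ⁻¹' B, p.2.1.2 ∂μ :=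
      setIntegral_map hSB measurable_snd.snd.aestronglyMeasurable (hφn_meas n).aemeasurable
    have h2 : ∫ z in (fun z : (Fin n → Ω₁ × ℝ) × (Ω₁ × ℝ) => (z.1, z.2.1)) ⁻¹' B,
        mstar n z.1 z.2.1 ∂(μ.map (φn n))
        = ∫ p in ψ n ⁻¹' B, mstar n (fun i : Fin n => p.1 (i : ℕ)) p.2.1.1 ∂μ :=
      setIntegral_map hSB ((hmstar_meas n).comp (measurable_fst.prodMk
        (measurable_fst.comp measurable_snd))).aestronglyMeasurable (hφn_meas n).aemeasurable
    calc ∫ p in ψ n ⁻¹' B, mstar n (fun i : Fin n => p.1 (i : ℕ)) p.2.1.1 ∂μ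
        = ∫ z in (fun z : (Fin n → Ω₁ × ℝ) × (Ω₁ × ℝ) => (z.1, z.2.1)) ⁻¹' B,
            mstar n z.1 z.2.1 ∂(μ.map (φn n)) := h2.symm
      _ = ∫ z in (fun z : (Fin n → Ω₁ × ℝ) × (Ω₁ × ℝ) => (z.1, z.2.1)) ⁻¹' B, z.2.2
            ∂(μ.map (φn n)) := ((hregn n).2 B hB).symm
      _ = ∫ p in ψ n ⁻¹' B, p.2.1.2 ∂μ := h1
  -- conditional expectation identification at infinity
  have hginf_ae : (fun p : Ω => mstarinf p.1 p.2.1.1)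
      =ᵐ[μ] μ[(fun p : Ω => p.2.1.2)|MeasurableSpace.comap ψinf inferInstance] := by
    have hgi : Integrable (fun p : Ω => mstarinf p.1 p.2.1.1) μ :=
      hreginf.1.comp_aemeasurable hφinf_meas.aemeasurable
    have hψm : @Measurable Ω ((ℕ → Ω₁ × ℝ) × Ω₁)
        (MeasurableSpace.comap ψinf inferInstance) _ ψinf :=
      Measurable.of_comap_le (le_refl _)
    have hgsm : @Measurable Ω ℝ (MeasurableSpace.comap ψinf inferInstance) _
        (fun p : Ω => mstarinf p.1 p.2.1.1) :=
      hmstarinf_meas.comp hψm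
    refine ae_eq_condExp_of_forall_setIntegral_eq hψinf_meas.comap_le hf_int
      (fun s _ _ => hgi.integrableOn) (fun s hs _ => ?_)
      hgsm.stronglyMeasurable.aestronglyMeasurable
    obtain ⟨B, hB, rfl⟩ := hs
    have hSB : MeasurableSet ((fun z : (ℕ → Ω₁ × ℝ) × (Ω₁ × ℝ) => (z.1, z.2.1)) ⁻¹' B) :=
      (measurable_fst.prodMk (measurable_fst.comp measurable_snd)) hB
    have h1 : ∫ z in (fun z : (ℕ → Ω₁ × ℝ) × (Ω₁ × ℝ) => (z.1, z.2.1)) ⁻¹' B, z.2.2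
        ∂(μ.map φinf) = ∫ p in ψinf ⁻¹' B, p.2.1.2 ∂μ :=
      setIntegral_map hSB measurable_snd.snd.aestronglyMeasurable hφinf_meas.aemeasurable
    have h2 : ∫ z in (fun z : (ℕ → Ω₁ × ℝ) × (Ω₁ × ℝ) => (z.1, z.2.1)) ⁻¹' B,
        mstarinf z.1 z.2.1 ∂(μ.map φinf)
        = ∫ p in ψinf ⁻¹' B, mstarinf p.1 p.2.1.1 ∂μ :=
      setIntegral_map hSB (hmstarinf_meas.comp (measurable_fst.prodMk
        (measurable_fst.comp measurable_snd))).aestronglyMeasurable hφinf_meas.aemeasurable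
    calc ∫ p in ψinf ⁻¹' B, mstarinf p.1 p.2.1.1 ∂μ
        = ∫ z in (fun z : (ℕ → Ω₁ × ℝ) × (Ω₁ × ℝ) => (z.1, z.2.1)) ⁻¹' B,
            mstarinf z.1 z.2.1 ∂(μ.map φinf) := h2.symm
      _ = ∫ z in (fun z : (ℕ → Ω₁ × ℝ) × (Ω₁ × ℝ) => (z.1, z.2.1)) ⁻¹' B, z.2.2
            ∂(μ.map φinf) := (hreginf.2 B hB).symm
      _ = ∫ p in ψinf ⁻¹' B, p.2.1.2 ∂μ := h1
  -- Lévy's upward theorem and conclusion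
  have hlevy := tendsto_ae_condExp (μ := μ) (ℱ := ℱ) (fun p : Ω => p.2.1.2)
  have hcondeq : μ[(fun p : Ω => p.2.1.2)|⨆ n, ℱ n]
      = μ[(fun p : Ω => p.2.1.2)|MeasurableSpace.comap ψinf inferInstance] := by rw [hsup]
  have hall : ∀ᵐ p ∂μ, ∀ n, mstar n (fun i : Fin n => p.1 (i : ℕ)) p.2.1.1
      = (μ[(fun p : Ω => p.2.1.2)|ℱ n]) p := ae_all_iff.mpr fun n => hgn_ae n
  filter_upwards [hlevy, hall, hginf_ae] with p h1 h2 h3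
  have h4 : (fun n : ℕ => mstar n (fun i : Fin n => p.1 (i : ℕ)) p.2.1.1)
      = fun n => (μ[(fun p : Ω => p.2.1.2)|ℱ n]) p := funext h2
  rw [h4, h3, ← hcondeq]
  exact h1
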